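/- The function G(z,t) = ψ_t(z) G_0(φ_t(z)) / cosh(t), where ψ_t(z) = 1/(1 - z tanh(t)) and φ_t(z) = (z - tanh(t))/(1 - z tanh(t)), satisfies the PDE ∂G/∂t = (z² - 1) ∂G/∂z + z G with G(z,0) = G_0(z), whenever G_0 is analytic at φ_t(z) and 1 - z tanh(t) ≠ 0. -/

import Mathlib

open Complex

/-- `G(z,t) = ψ_t(z) G₀(φ_t(z)) / cosh t`, with `ψ_t(z) = 1/(1 - z tanh t)` and
`φ_t(z) = (z - tanh t)/(1 - z tanh t)`, satisfies the generating-function PDE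
`∂G/∂t = (z² - 1) ∂G/∂z + z G` with `G(z,0) = G₀(z)`, whenever `G₀` is analytic at
`φ_t(z)` and `1 - z tanh t ≠ 0`. -/
theorem stmt8 (G₀ : ℂ → ℂ) (G : ℂ → ℝ → ℂ)
    (hG : ∀ (z : ℂ) (t : ℝ),
      G z t = (1 / (1 - z * Real.tanh t)) *
        G₀ ((z - Real.tanh t) / (1 - z * Real.tanh t)) / Real.cosh t)
    (z : ℂ) (t : ℝ)
    (hden : 1 - z * Real.tanh t ≠ 0)
    (hG₀ : AnalyticAt ℂ G₀ ((z - Real.tanh t) / (1 - z * Real.tanh t))) :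
    HasDerivAt (fun s : ℝ => G z s)
      ((z ^ 2 - 1) * deriv (fun w : ℂ => G w t) z + z * G z t) t ∧
    G z 0 = G₀ z := by
  have hzero : G z 0 = G₀ z := by
    rw [hG z 0]
    simp [Real.tanh_zero, Real.cosh_zero]
  refine ⟨?_, hzero⟩
  have hcR : Real.cosh t ≠ 0 := (Real.cosh_pos t).ne'
  have hc : (Real.cosh t : ℂ) ≠ 0 := by exact_mod_cast hcR
  set τ : ℂ := (Real.tanh t : ℂ) with hτdef
  set c : ℂ := (Real.cosh t : ℂ) with hcdef
  set φ : ℂ := (z - τ) / (1 - z * τ) with hφdef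
  -- the z-derivative
  have hDz : HasDerivAt (fun w : ℂ => 1 - w * τ) (-τ) z := by
    simpa using ((hasDerivAt_id z).mul_const τ).const_sub 1
  have hNz : HasDerivAt (fun w : ℂ => w - τ) 1 z := (hasDerivAt_id z).sub_const τ
  have hφz : HasDerivAt (fun w : ℂ => (w - τ) / (1 - w * τ))
      ((1 - τ ^ 2) / (1 - z * τ) ^ 2) z := by
    refine (hNz.div hDz hden).congr_deriv ?_
    ring
  have hg : HasDerivAt G₀ (deriv G₀ φ) φ := hG₀.differentiableAt.hasDerivAt
  have hcompz : HasDerivAt (fun w : ℂ => G₀ ((w - τ) / (1 - w * τ)))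
      (deriv G₀ φ * ((1 - τ ^ 2) / (1 - z * τ) ^ 2)) z := hg.comp z hφz
  have hψz : HasDerivAt (fun w : ℂ => 1 / (1 - w * τ)) (τ / (1 - z * τ) ^ 2) z := by
    refine ((hasDerivAt_const z (1 : ℂ)).div hDz hden).congr_deriv ?_
    ring
  have hFz := (hψz.mul hcompz).div_const c
  have hderivG : deriv (fun w : ℂ => G w t) z =
      (τ / (1 - z * τ) ^ 2 * G₀ φ +
        1 / (1 - z * τ) * (deriv G₀ φ * ((1 - τ ^ 2) / (1 - z * τ) ^ 2))) / c := by
    have hfun : (fun w : ℂ => G w t) =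
        fun w : ℂ => (1 / (1 - w * τ)) * G₀ ((w - τ) / (1 - w * τ)) / c :=
      funext fun w => hG w t
    rw [hfun]
    exact hFz.deriv
  -- the t-derivative
  have htanhR : HasDerivAt Real.tanh (1 - Real.tanh t ^ 2) t := by
    have h := (Real.hasDerivAt_sinh t).div (Real.hasDerivAt_cosh t) hcR
    have heq : Real.sinh / Real.cosh = Real.tanh :=
      funext fun s => (Real.tanh_eq_sinh_div_cosh s).symm
    rw [heq] at h
    refine h.congr_deriv ?_
    rw [Real.tanh_eq_sinh_div_cosh]
    field_simp
  have hu : HasDerivAt (fun s : ℝ => ((Real.tanh s : ℂ))) ((1 - Real.tanh t ^ 2 : ℝ) : ℂ) t :=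
    htanhR.ofReal_comp
  have hτ' : ((1 - Real.tanh t ^ 2 : ℝ) : ℂ) = 1 - τ ^ 2 := by
    rw [hτdef, Complex.ofReal_sub, Complex.ofReal_one, Complex.ofReal_pow]
  rw [hτ'] at hu
  have hcosh : HasDerivAt (fun s : ℝ => ((Real.cosh s : ℂ))) ((Real.sinh t : ℂ)) t :=
    (Real.hasDerivAt_cosh t).ofReal_comp
  have hsinh : (Real.sinh t : ℂ) = τ * c := by
    rw [hτdef, hcdef, ← Complex.ofReal_mul, Real.tanh_eq_sinh_div_cosh,
      div_mul_cancel₀ _ hcR]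
  rw [hsinh] at hcosh
  have hDt : HasDerivAt (fun s : ℝ => 1 - z * (Real.tanh s : ℂ)) (-(z * (1 - τ ^ 2))) t :=
    (hu.const_mul z).const_sub 1
  have hNt : HasDerivAt (fun s : ℝ => z - (Real.tanh s : ℂ)) (-(1 - τ ^ 2)) t :=
    hu.const_sub z
  have hφt : HasDerivAt (fun s : ℝ => (z - (Real.tanh s : ℂ)) / (1 - z * (Real.tanh s : ℂ)))
      ((1 - τ ^ 2) * (z ^ 2 - 1) / (1 - z * τ) ^ 2) t := by
    refine (hNt.div hDt hden).congr_deriv ?_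
    ring
  have hcompt : HasDerivAt
      (fun s : ℝ => G₀ ((z - (Real.tanh s : ℂ)) / (1 - z * (Real.tanh s : ℂ))))
      (((1 - τ ^ 2) * (z ^ 2 - 1) / (1 - z * τ) ^ 2) * deriv G₀ φ) t := by
    have h := HasDerivAt.scomp t hg hφt
    simpa only [smul_eq_mul, Function.comp_def] using h
  have hψt : HasDerivAt (fun s : ℝ => 1 / (1 - z * (Real.tanh s : ℂ)))
      (z * (1 - τ ^ 2) / (1 - z * τ) ^ 2) t := by
    refine ((hasDerivAt_const t (1 : ℂ)).div hDt hden).congr_deriv ?_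
    ring
  have hHt := (hψt.mul hcompt).div hcosh hc
  have hfun2 : (fun s : ℝ => G z s) =
      fun s : ℝ => (1 / (1 - z * (Real.tanh s : ℂ))) *
        G₀ ((z - (Real.tanh s : ℂ)) / (1 - z * (Real.tanh s : ℂ))) / (Real.cosh s : ℂ) :=
    funext fun s => hG z s
  rw [hfun2]
  refine hHt.congr_deriv ?_
  simp only [Pi.mul_apply]
  rw [hderivG, hG z t, ← hτdef, ← hcdef, ← hφdef]
  revert hden hc
  generalize G₀ φ = g0
  generalize deriv G₀ φ = g'
  generalize τ = T
  generalize c = C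
  intro hden hc
  have hA : (T / (1 - z * T) ^ 2 * g0 +
      1 / (1 - z * T) * (g' * ((1 - T ^ 2) / (1 - z * T) ^ 2))) / C =
      (T * (1 - z * T) * g0 + (1 - T ^ 2) * g') / ((1 - z * T) ^ 3 * C) := by
    field_simp [hden, hc]
  have hB : ((z * (1 - T ^ 2) / (1 - z * T) ^ 2 * g0 +
        1 / (1 - z * T) * ((1 - T ^ 2) * (z ^ 2 - 1) / (1 - z * T) ^ 2 * g')) * C -
      1 / (1 - z * T) * g0 * (T * C)) / C ^ 2 =
      (z * (1 - T ^ 2) * (1 - z * T) * g0 + (1 - T ^ 2) * (z ^ 2 - 1) * g'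
        - T * (1 - z * T) ^ 2 * g0) / ((1 - z * T) ^ 3 * C) := by
    have key : (z * (1 - T ^ 2) / (1 - z * T) ^ 2 * g0 +
          1 / (1 - z * T) * ((1 - T ^ 2) * (z ^ 2 - 1) / (1 - z * T) ^ 2 * g')) -
        1 / (1 - z * T) * g0 * T =
        (z * (1 - T ^ 2) * (1 - z * T) * g0 + (1 - T ^ 2) * (z ^ 2 - 1) * g'
        - T * (1 - z * T) ^ 2 * g0) / (1 - z * T) ^ 3 := by
      field_simp [hden]
    calc ((z * (1 - T ^ 2) / (1 - z * T) ^ 2 * g0 +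
          1 / (1 - z * T) * ((1 - T ^ 2) * (z ^ 2 - 1) / (1 - z * T) ^ 2 * g')) * C -
        1 / (1 - z * T) * g0 * (T * C)) / C ^ 2
        = ((z * (1 - T ^ 2) / (1 - z * T) ^ 2 * g0 +
          1 / (1 - z * T) * ((1 - T ^ 2) * (z ^ 2 - 1) / (1 - z * T) ^ 2 * g')) -
        1 / (1 - z * T) * g0 * T) / C := by
          rw [show ((z * (1 - T ^ 2) / (1 - z * T) ^ 2 * g0 +
              1 / (1 - z * T) * ((1 - T ^ 2) * (z ^ 2 - 1) / (1 - z * T) ^ 2 * g')) * C -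
              1 / (1 - z * T) * g0 * (T * C)) =
              ((z * (1 - T ^ 2) / (1 - z * T) ^ 2 * g0 +
              1 / (1 - z * T) * ((1 - T ^ 2) * (z ^ 2 - 1) / (1 - z * T) ^ 2 * g')) -
              1 / (1 - z * T) * g0 * T) * C from by ring, mul_div_assoc,
            show C / C ^ 2 = 1 / C from by rw [pow_two, ← div_div, div_self hc], mul_one_div]
      _ = _ := by rw [key, div_div]
  rw [hA, hB]
  field_simp [hden, hc]
  ring
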